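/- arXiv:2302.11083 — 4 statements merged into one kernel-verified Lean document; each statement's English description precedes it below -/
import Mathlib

section
/- Let u₁ = (a₁, a₂, 0), u₂ = (b₁, 0, b₂), u₃ = (0, c₁, c₂) be three unit vectors in ℝ³ with nonnegative coordinates, and let δ ∈ [0, 1/2]. If u₁·u₂ + u₁·u₃ + u₂·u₃ ≥ 3/2 − δ³/2, then each pairwise dot product satisfies u₁·u₂ ≥ 1/2 − δ, u₁·u₃ ≥ 1/2 − δ, and u₂·u₃ ≥ 1/2 − δ. -/
lemma aux4 (p s δ : ℝ) (hs : 0 ≤ s) (hsδ : s ≤ δ^3) (hp : p^2 ≤ s)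
    (h0 : 0 ≤ δ) (h1 : δ ≤ 1/2) : p + s/2 ≤ δ := by
  have hA : δ^3 ≤ (δ - δ^3/2)^2 := by
    nlinarith [mul_nonneg (mul_nonneg h0 h0) (by linarith : (0:ℝ) ≤ 1 - 3/2*δ),
      mul_nonneg (mul_nonneg (mul_nonneg h0 h0) h0) (by linarith : (0:ℝ) ≤ 1/2 - δ),
      sq_nonneg (δ^3)]
  have hq0 : 0 ≤ δ - δ^3/2 := by nlinarith [mul_nonneg (mul_nonneg h0 h0) h0]
  have h2 : p ≤ δ - δ^3/2 := by nlinarith [hA, hp, hsδ]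
  linarith

/-- For unit vectors u₁=(a₁,a₂,0), u₂=(b₁,0,b₂), u₃=(0,c₁,c₂) in ℝ³ with nonnegative
coordinates and δ ∈ [0,1/2]: if the sum of pairwise dot products is ≥ 3/2 − δ³/2, then
each pairwise dot product is ≥ 1/2 − δ. -/
theorem stmt4 (a₁ a₂ b₁ b₂ c₁ c₂ δ : ℝ)
    (ha₁ : 0 ≤ a₁) (ha₂ : 0 ≤ a₂) (hb₁ : 0 ≤ b₁) (hb₂ : 0 ≤ b₂)
    (hc₁ : 0 ≤ c₁) (hc₂ : 0 ≤ c₂)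
    (hu₁ : a₁ ^ 2 + a₂ ^ 2 = 1) (hu₂ : b₁ ^ 2 + b₂ ^ 2 = 1) (hu₃ : c₁ ^ 2 + c₂ ^ 2 = 1)
    (hδ : δ ∈ Set.Icc (0:ℝ) (1/2))
    (hsum : 3 / 2 - δ ^ 3 / 2 ≤ a₁ * b₁ + a₂ * c₁ + b₂ * c₂) :
    1 / 2 - δ ≤ a₁ * b₁ ∧ 1 / 2 - δ ≤ a₂ * c₁ ∧ 1 / 2 - δ ≤ b₂ * c₂ := by
  obtain ⟨h0, h1⟩ := hδ
  set x := a₁ - b₁ with hx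
  set y := a₂ - c₁ with hy
  set z := b₂ - c₂ with hz
  have hs0 : 0 ≤ x^2 + y^2 + z^2 := by positivity
  have hkey : x^2 + y^2 + z^2 ≤ δ^3 := by
    have : x^2 + y^2 + z^2 = 3 - 2*(a₁*b₁ + a₂*c₁ + b₂*c₂) := by
      rw [hx, hy, hz]; linear_combination hu₁ + hu₂ + hu₃
    linarith
  refine ⟨?_, ?_, ?_⟩
  · have hid : a₁*b₁ = 1/2 - (c₁*y + c₂*z) - (x^2+y^2+z^2)/2 := by
      rw [hx, hy, hz]; linear_combination ((1:ℝ)/2)*hu₁ + 1/2*hu₂ - 1/2*hu₃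
    have hp : (c₁*y + c₂*z)^2 ≤ x^2+y^2+z^2 := by
      nlinarith [sq_nonneg (c₁*z - c₂*y), sq_nonneg x, sq_nonneg (c₁*y+c₂*z),
        sq_nonneg c₁, sq_nonneg c₂]
    have := aux4 (c₁*y + c₂*z) (x^2+y^2+z^2) δ hs0 hkey hp h0 h1
    linarith
  · have hid : a₂*c₁ = 1/2 - (b₁*x - b₂*z) - (x^2+y^2+z^2)/2 := by
      rw [hx, hy, hz]; linear_combination ((1:ℝ)/2)*hu₁ - 1/2*hu₂ + 1/2*hu₃
    have hp : (b₁*x - b₂*z)^2 ≤ x^2+y^2+z^2 := by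
      nlinarith [sq_nonneg (b₁*z + b₂*x), sq_nonneg y, sq_nonneg (b₁*x - b₂*z),
        sq_nonneg b₁, sq_nonneg b₂]
    have := aux4 (b₁*x - b₂*z) (x^2+y^2+z^2) δ hs0 hkey hp h0 h1
    linarith
  · have hid : b₂*c₂ = 1/2 - (-(a₁*x + a₂*y)) - (x^2+y^2+z^2)/2 := by
      rw [hx, hy, hz]; linear_combination (-(1:ℝ)/2)*hu₁ + 1/2*hu₂ + 1/2*hu₃
    have hp : (-(a₁*x + a₂*y))^2 ≤ x^2+y^2+z^2 := by
      nlinarith [sq_nonneg (a₁*y - a₂*x), sq_nonneg z, sq_nonneg (a₁*x + a₂*y),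
        sq_nonneg a₁, sq_nonneg a₂]
    have := aux4 (-(a₁*x + a₂*y)) (x^2+y^2+z^2) δ hs0 hkey hp h0 h1
    linarith
end

section
/- Fix distinct v₀*, w₀* ∈ 𝔽₂ⁿ and A₁ ≠ A₁' ∈ 𝒜₁ (unordered pairs summing to v₀* + w₀*, hence disjoint). Write A₁ = {v₁, w₁}, A₁' = {v₁', w₁'}. Then there are exactly four configurations B such that both ((A₀*, A₁), B) and ((A₀*, A₁'), B) lie in R[(v₀*, w₀*)], namely B ∈ { ({v₀*, v₀*+v₁+v₁'}, {v₁, v₁'}), ({v₀*, v₀*+w₁+w₁'}, {w₁, w₁'}), ({v₀*, v₀*+v₁+w₁'}, {v₁, w₁'}), ({v₀*, v₀*+w₁+v₁'}, {w₁, v₁'}) }, where A₀* = {v₀*, w₀*}. -/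
/-- Fix distinct v₀*, w₀* ∈ 𝔽₂ⁿ and distinct pairs A₁ = {v₁,w₁}, A₁' = {v₁',w₁'} both
summing to v₀* + w₀*.  The configurations B = (B₀, B₁) such that both ((A₀*, A₁), B) and
((A₀*, A₁'), B) lie in R[(v₀*, w₀*)] are exactly the four listed ones. -/
theorem stmt13 {n : ℕ} (v₀ w₀ v₁ w₁ v₁' w₁' : Fin n → ZMod 2)
    (hvw : v₀ ≠ w₀) (h1 : v₁ ≠ w₁) (h1' : v₁' ≠ w₁')
    (hs : v₁ + w₁ = v₀ + w₀) (hs' : v₁' + w₁' = v₀ + w₀)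
    (hAA : ({v₁, w₁} : Finset (Fin n → ZMod 2)) ≠ {v₁', w₁'}) :
    {B : Finset (Fin n → ZMod 2) × Finset (Fin n → ZMod 2) |
        B.1.card = 2 ∧ B.2.card = 2 ∧ B.1.sum id = B.2.sum id ∧
        ({v₀, w₀} : Finset (Fin n → ZMod 2)) ∩ B.1 = {v₀} ∧
        (({v₁, w₁} : Finset (Fin n → ZMod 2)) ∩ B.2).card = 1 ∧
        (({v₁', w₁'} : Finset (Fin n → ZMod 2)) ∩ B.2).card = 1}
      = {(({v₀, v₀ + v₁ + v₁'} : Finset (Fin n → ZMod 2)),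
            ({v₁, v₁'} : Finset (Fin n → ZMod 2))),
         ({v₀, v₀ + w₁ + w₁'}, {w₁, w₁'}),
         ({v₀, v₀ + v₁ + w₁'}, {v₁, w₁'}),
         ({v₀, v₀ + w₁ + v₁'}, {w₁, v₁'})} := by
  classical
  -- characteristic-two facts
  have hch : ∀ a : Fin n → ZMod 2, a + a = 0 :=
    fun a => funext fun i => CharTwo.add_self_eq_zero (a i)
  have heq0 : ∀ a b : Fin n → ZMod 2, a + b = 0 → a = b := by
    intro a b h
    funext i
    have h1 := congrFun h i
    have h2 := eq_neg_of_add_eq_zero_left h1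
    simpa [CharTwo.neg_eq] using h2
  have hadd : ∀ a b c : Fin n → ZMod 2, a + b = c ↔ b = a + c := by
    intro a b c
    constructor
    · intro h; rw [← h, ← add_assoc, hch a, zero_add]
    · intro h; rw [h, ← add_assoc, hch a, zero_add]
  have hsum : v₁ + w₁ = v₁' + w₁' := hs.trans hs'.symm
  -- the two fibers are disjoint
  have hvv' : v₁ ≠ v₁' := by
    intro h
    apply hAA
    have hw : w₁ = w₁' := by
      apply add_left_cancel (a := v₁)
      rw [hsum, h]
    rw [h, hw]
  have hww' : w₁ ≠ w₁' := by
    intro h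
    apply hAA
    have hv : v₁ = v₁' := by
      apply add_right_cancel (b := w₁)
      rw [hsum, h]
    rw [h, hv]
  have hvw' : v₁ ≠ w₁' := by
    intro h
    apply hAA
    have hw : w₁ = v₁' := by
      apply add_left_cancel (a := v₁)
      rw [hsum, h, add_comm]
    rw [h, hw, Finset.pair_comm]
  have hwv' : w₁ ≠ v₁' := by
    intro h
    apply hAA
    have hv : v₁ = w₁' := by
      apply add_right_cancel (b := w₁)
      rw [hsum, h, add_comm]
    rw [h, hv, Finset.pair_comm]
  -- generic computation of pair intersections
  have hcard1 : ∀ p q x y : Fin n → ZMod 2, (x = p ∨ x = q) → y ≠ p → y ≠ q →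
      ({p, q} : Finset (Fin n → ZMod 2)) ∩ {x, y} = {x} := by
    intro p q x y hx hyp hyq
    ext a
    simp only [Finset.mem_inter, Finset.mem_insert, Finset.mem_singleton]
    constructor
    · rintro ⟨ha1, ha2⟩
      rcases ha2 with rfl | rfl
      · rfl
      · rcases ha1 with rfl | rfl
        · exact absurd rfl hyp
        · exact absurd rfl hyq
    · rintro rfl; exact ⟨hx, Or.inl rfl⟩
  -- the main verification lemma for each of the four candidates
  have main : ∀ x y : Fin n → ZMod 2, (x = v₁ ∨ x = w₁) → (y = v₁' ∨ y = w₁') →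
      (({v₀, v₀ + x + y} : Finset (Fin n → ZMod 2)), ({x, y} : Finset (Fin n → ZMod 2))) ∈
        {B : Finset (Fin n → ZMod 2) × Finset (Fin n → ZMod 2) |
          B.1.card = 2 ∧ B.2.card = 2 ∧ B.1.sum id = B.2.sum id ∧
          ({v₀, w₀} : Finset (Fin n → ZMod 2)) ∩ B.1 = {v₀} ∧
          (({v₁, w₁} : Finset (Fin n → ZMod 2)) ∩ B.2).card = 1 ∧
          (({v₁', w₁'} : Finset (Fin n → ZMod 2)) ∩ B.2).card = 1} := by
    intro x y hx hy
    have hyv₁ : y ≠ v₁ := by rcases hy with rfl | rfl; exacts [hvv'.symm, hvw'.symm]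
    have hyw₁ : y ≠ w₁ := by rcases hy with rfl | rfl; exacts [hwv'.symm, hww'.symm]
    have hxv₁' : x ≠ v₁' := by rcases hx with rfl | rfl; exacts [hvv', hwv']
    have hxw₁' : x ≠ w₁' := by rcases hx with rfl | rfl; exacts [hvw', hww']
    have hxy : x ≠ y := by rcases hy with rfl | rfl; exacts [hxv₁', hxw₁']
    have hxyvw : x + y ≠ v₀ + w₀ := by
      intro h
      rw [← hs] at h
      rcases hx with hx1 | hx1
      · rw [hx1] at h
        exact hyw₁ (add_left_cancel h)
      · rw [hx1, add_comm v₁ w₁] at h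
        exact hyv₁ (add_left_cancel h)
    have hz0 : v₀ + x + y ≠ v₀ := by
      intro h
      rw [add_assoc] at h
      have h2 : x + y = v₀ + v₀ := (hadd v₀ (x + y) v₀).mp h
      rw [hch v₀] at h2
      exact hxy (heq0 _ _ h2)
    have hzw : v₀ + x + y ≠ w₀ := by
      intro h
      rw [add_assoc] at h
      exact hxyvw ((hadd v₀ (x + y) w₀).mp h)
    constructor
    · exact Finset.card_pair (Ne.symm hz0)
    constructor
    · exact Finset.card_pair hxy
    constructor
    · show Finset.sum {v₀, v₀ + x + y} id = Finset.sum {x, y} id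
      rw [Finset.sum_pair (Ne.symm hz0), Finset.sum_pair hxy]
      show v₀ + (v₀ + x + y) = x + y
      rw [← add_assoc, ← add_assoc, hch v₀, zero_add]
    constructor
    · exact hcard1 v₀ w₀ v₀ (v₀ + x + y) (Or.inl rfl) hz0 hzw
    constructor
    · rw [hcard1 v₁ w₁ x y hx hyv₁ hyw₁]; exact Finset.card_singleton x
    · rw [Finset.pair_comm x y, hcard1 v₁' w₁' y x hy hxv₁' hxw₁']
      exact Finset.card_singleton y
  ext B
  simp only [Set.mem_insert_iff, Set.mem_singleton_iff]
  constructor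
  · intro hB
    obtain ⟨hc1, hc2, hsum2, hI0, hI1, hI1'⟩ := hB
    obtain ⟨x, hx⟩ := Finset.card_eq_one.mp hI1
    obtain ⟨y, hy⟩ := Finset.card_eq_one.mp hI1'
    have hxm : x ∈ ({v₁, w₁} : Finset (Fin n → ZMod 2)) ∧ x ∈ B.2 := by
      have : x ∈ ({v₁, w₁} : Finset (Fin n → ZMod 2)) ∩ B.2 := by
        rw [hx]; exact Finset.mem_singleton_self x
      exact Finset.mem_inter.mp this
    have hym : y ∈ ({v₁', w₁'} : Finset (Fin n → ZMod 2)) ∧ y ∈ B.2 := by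
      have : y ∈ ({v₁', w₁'} : Finset (Fin n → ZMod 2)) ∩ B.2 := by
        rw [hy]; exact Finset.mem_singleton_self y
      exact Finset.mem_inter.mp this
    have hxmem : x = v₁ ∨ x = w₁ := by
      have := hxm.1; simpa using this
    have hymem : y = v₁' ∨ y = w₁' := by
      have := hym.1; simpa using this
    have hxy : x ≠ y := by
      rcases hxmem with rfl | rfl <;> rcases hymem with rfl | rfl
      exacts [hvv', hvw', hwv', hww']
    -- B.2 = {x, y}
    have hB2 : B.2 = {x, y} := by
      refine (Finset.eq_of_subset_of_card_le ?_ ?_).symm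
      · intro a ha
        rcases Finset.mem_insert.mp ha with rfl | ha
        · exact hxm.2
        · rw [Finset.mem_singleton.mp ha]; exact hym.2
      · rw [hc2, Finset.card_pair hxy]
    -- B.1 = {v₀, z}
    have hv0 : v₀ ∈ B.1 := by
      have : v₀ ∈ ({v₀, w₀} : Finset (Fin n → ZMod 2)) ∩ B.1 := by
        rw [hI0]; exact Finset.mem_singleton_self v₀
      exact (Finset.mem_inter.mp this).2
    obtain ⟨a, b, hab, hB1ab⟩ := Finset.card_eq_two.mp hc1
    have hzex : ∃ z, z ≠ v₀ ∧ B.1 = {v₀, z} := by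
      rw [hB1ab] at hv0
      rcases Finset.mem_insert.mp hv0 with h | h
      · exact ⟨b, fun e => hab (by rw [← h, e]), by rw [hB1ab, ← h]⟩
      · rw [Finset.mem_singleton] at h
        exact ⟨a, fun e => hab (by rw [e, h]), by rw [hB1ab, ← h, Finset.pair_comm a v₀]⟩
    obtain ⟨z, hzv, hB1⟩ := hzex
    have hzsum : v₀ + z = x + y := by
      rw [hB1, hB2, Finset.sum_pair (Ne.symm hzv), Finset.sum_pair hxy] at hsum2
      exact hsum2
    have hzval : z = v₀ + (x + y) := (hadd v₀ z (x + y)).mp hzsum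
    have hBval : B = (({v₀, v₀ + x + y} : Finset (Fin n → ZMod 2)),
        ({x, y} : Finset (Fin n → ZMod 2))) := by
      have : B = (B.1, B.2) := rfl
      rw [this, hB1, hB2, hzval, add_assoc]
    rcases hxmem with rfl | rfl <;> rcases hymem with rfl | rfl
    · exact Or.inl hBval
    · exact Or.inr (Or.inr (Or.inl hBval))
    · exact Or.inr (Or.inr (Or.inr hBval))
    · exact Or.inr (Or.inl hBval)
  · rintro (rfl | rfl | rfl | rfl)
    · exact main v₁ v₁' (Or.inl rfl) (Or.inl rfl)
    · exact main w₁ w₁' (Or.inr rfl) (Or.inr rfl)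
    · exact main v₁ w₁' (Or.inl rfl) (Or.inr rfl)
    · exact main w₁ v₁' (Or.inr rfl) (Or.inl rfl)
end

section
/- Let {x₁, …, x_I} be unit vectors in ℂ² (d = 2) with pairwise inner products bounded: max_{i≠j} |⟨x_i, x_j⟩| ≤ 1 − ε⁴ for some ε ∈ (0, 1/8). Then I ≤ 1/ε⁸. -/
open Metric MeasureTheory

set_option maxHeartbeats 1600000 in
/-- Unit vectors in ℂ² with pairwise inner products of absolute value at most 1 − ε⁴
(ε ∈ (0,1/8)) number at most 1/ε⁸. -/
theorem stmt14 (ε : ℝ) (hε : ε ∈ Set.Ioo (0:ℝ) (1/8)) (I : ℕ)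
    (x : Fin I → EuclideanSpace ℂ (Fin 2))
    (hnorm : ∀ i, ‖x i‖ = 1)
    (hij : ∀ i j, i ≠ j → ‖(inner ℂ (x i) (x j) : ℂ)‖ ≤ 1 - ε ^ 4) :
    (I : ℝ) ≤ 1 / ε ^ 8 := by
  obtain ⟨hε0, hε8⟩ := hε
  have hε4 : ε^4 ≤ 1 := pow_le_one₀ hε0.le (by linarith)
  -- coordinates of the unit vectors
  have hsum : ∀ i, (x i 0).re^2 + (x i 0).im^2 + ((x i 1).re^2 + (x i 1).im^2) = 1 := by
    intro i
    have h := hnorm i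
    rw [EuclideanSpace.norm_eq, Real.sqrt_eq_one] at h
    simpa [Fin.sum_univ_two, Complex.sq_norm, Complex.normSq_apply,
      ← sq] using h
  -- the Bloch-sphere image of each vector
  set v : Fin I → EuclideanSpace ℝ (Fin 3) := fun i =>
    (WithLp.equiv 2 (Fin 3 → ℝ)).symm
      ![2*((x i 0).re*(x i 1).re + (x i 0).im*(x i 1).im),
        2*((x i 0).im*(x i 1).re - (x i 0).re*(x i 1).im),
        (x i 0).re^2+(x i 0).im^2 - ((x i 1).re^2+(x i 1).im^2)] with hv
  have hvnorm : ∀ i, ‖v i‖ = 1 := by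
    intro i
    rw [hv, EuclideanSpace.norm_eq]
    have : ∑ k, ‖((WithLp.equiv 2 (Fin 3 → ℝ)).symm
      ![2*((x i 0).re*(x i 1).re + (x i 0).im*(x i 1).im),
        2*((x i 0).im*(x i 1).re - (x i 0).re*(x i 1).im),
        (x i 0).re^2+(x i 0).im^2 - ((x i 1).re^2+(x i 1).im^2)]) k‖^2 = 1 := by
      simp [Fin.sum_univ_three, Real.norm_eq_abs, sq_abs]
      nlinarith [hsum i]
    rw [this, Real.sqrt_one]
  -- Bloch images are pairwise `2ε²`-separated
  have hsep : ∀ i j : Fin I, i ≠ j → 2*ε^2 ≤ dist (v i) (v j) := by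
    intro i j hne
    have hT : ‖(inner ℂ (x i) (x j) : ℂ)‖^2 =
        ((x i 0).re*(x j 0).re + (x i 0).im*(x j 0).im
          + ((x i 1).re*(x j 1).re + (x i 1).im*(x j 1).im))^2
        + ((x i 0).re*(x j 0).im - (x i 0).im*(x j 0).re
          + ((x i 1).re*(x j 1).im - (x i 1).im*(x j 1).re))^2 := by
      simp [PiLp.inner_apply, RCLike.inner_apply, Fin.sum_univ_two, 
        Complex.sq_norm, Complex.normSq_apply, Complex.add_re, Complex.add_im,
        Complex.mul_re, Complex.mul_im]
      ring
    have hTle : ‖(inner ℂ (x i) (x j) : ℂ)‖^2 ≤ (1 - ε^4)^2 := by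
      have h1 := hij i j hne
      nlinarith [norm_nonneg ((inner ℂ (x i) (x j) : ℂ))]
    rw [hv, EuclideanSpace.dist_eq]
    apply Real.le_sqrt_of_sq_le
    simp only [Fin.sum_univ_three, WithLp.equiv_symm_apply, PiLp.toLp_apply, Matrix.cons_val_zero,
      Matrix.cons_val_one, Matrix.head_cons, Matrix.cons_val_two, Matrix.tail_cons,
      Real.dist_eq, sq_abs]
    have key : ((2*((x i 0).re*(x i 1).re + (x i 0).im*(x i 1).im))
          - (2*((x j 0).re*(x j 1).re + (x j 0).im*(x j 1).im)))^2
        + ((2*((x i 0).im*(x i 1).re - (x i 0).re*(x i 1).im))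
          - (2*((x j 0).im*(x j 1).re - (x j 0).re*(x j 1).im)))^2
        + (((x i 0).re^2+(x i 0).im^2 - ((x i 1).re^2+(x i 1).im^2))
          - ((x j 0).re^2+(x j 0).im^2 - ((x j 1).re^2+(x j 1).im^2)))^2
        = 4 - 4 * ‖(inner ℂ (x i) (x j) : ℂ)‖^2 := by
      rw [hT]
      linear_combination
        ((x i 0).re^2 + (x i 0).im^2 + ((x i 1).re^2 + (x i 1).im^2)
          + ((x j 0).re^2 + (x j 0).im^2 + ((x j 1).re^2 + (x j 1).im^2)) + 2) * (hsum i)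
        + ((x i 0).re^2 + (x i 0).im^2 + ((x i 1).re^2 + (x i 1).im^2)
          + ((x j 0).re^2 + (x j 0).im^2 + ((x j 1).re^2 + (x j 1).im^2)) + 2) * (hsum j)
    rw [key]
    nlinarith [hTle, pow_pos hε0 4, hε4]
  -- volume packing on the Bloch sphere
  have hpack : (I : ℝ) * ε^6 ≤ (1+ε^2)^3 := by
    have hr0 : (0:ℝ) < ε^2 := by positivity
    have hdisj : Pairwise (Function.onFun Disjoint (fun i => ball (v i) (ε^2))) := by
      intro i j hne
      exact ball_disjoint_ball (by linarith [hsep i j hne])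
    have hsub : (⋃ i, ball (v i) (ε^2)) ⊆ ball (0 : EuclideanSpace ℝ (Fin 3)) (1 + ε^2) := by
      refine Set.iUnion_subset fun i => ball_subset_ball' ?_
      rw [dist_zero_right, hvnorm i]; linarith
    have hmeas := measure_iUnion (μ := volume) hdisj (fun i => measurableSet_ball)
    have hle : ∑' i : Fin I, volume (ball (v i) (ε^2))
        ≤ volume (ball (0:EuclideanSpace ℝ (Fin 3)) (1+ε^2)) := by
      rw [← hmeas]; exact measure_mono hsub
    have hfr : Module.finrank ℝ (EuclideanSpace ℝ (Fin 3)) = 3 := by simp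
    have hball : ∀ i, volume (ball (v i) (ε^2))
        = ENNReal.ofReal (ε^6) * volume (ball (0:EuclideanSpace ℝ (Fin 3)) 1) := by
      intro i
      rw [Measure.addHaar_ball_of_pos volume (v i) hr0, hfr]
      norm_num [← pow_mul]
    have hball2 : volume (ball (0:EuclideanSpace ℝ (Fin 3)) (1+ε^2))
        = ENNReal.ofReal ((1+ε^2)^3) * volume (ball (0:EuclideanSpace ℝ (Fin 3)) 1) := by
      rw [Measure.addHaar_ball_of_pos volume _ (by positivity : (0:ℝ) < 1+ε^2), hfr]
    rw [tsum_fintype] at hle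
    simp only [hball, Finset.sum_const, Finset.card_univ, Fintype.card_fin, nsmul_eq_mul] at hle
    rw [hball2] at hle
    have hc0 : volume (ball (0:EuclideanSpace ℝ (Fin 3)) 1) ≠ 0 :=
      (measure_ball_pos volume _ one_pos).ne'
    have hct : volume (ball (0:EuclideanSpace ℝ (Fin 3)) 1) ≠ ⊤ :=
      measure_ball_lt_top.ne
    rw [← mul_assoc] at hle
    have hle2 : (I : ENNReal) * ENNReal.ofReal (ε^6) ≤ ENNReal.ofReal ((1+ε^2)^3) :=
      (ENNReal.mul_le_mul_iff_left hc0 hct).1 hle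
    have : ENNReal.ofReal ((I:ℝ) * ε^6) ≤ ENNReal.ofReal ((1+ε^2)^3) := by
      rwa [ENNReal.ofReal_mul (by positivity), ENNReal.ofReal_natCast]
    exact (ENNReal.ofReal_le_ofReal_iff (by positivity)).1 this
  -- final arithmetic
  clear hsum hij hnorm hsep hvnorm hv
  clear_value v
  clear v x
  rw [le_div_iff₀ (by positivity : (0:ℝ) < ε^8)]
  have he2 : ε^2 ≤ 1/64 := by nlinarith
  have h8 : (I:ℝ) * ε^8 ≤ (1+ε^2)^3 * ε^2 := by
    calc (I:ℝ)*ε^8 = (I:ℝ)*ε^6*ε^2 := by ring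
      _ ≤ (1+ε^2)^3 * ε^2 := mul_le_mul_of_nonneg_right hpack (sq_nonneg ε)
  have hfin : (1+ε^2)^3 * ε^2 ≤ 1 := by
    have h1 : (1+ε^2) ≤ 65/64 := by linarith
    have h2 : (1+ε^2)^3 ≤ (65/64)^3 := pow_le_pow_left₀ (by positivity) h1 3
    calc (1+ε^2)^3 * ε^2 ≤ (65/64)^3 * (1/64) :=
          mul_le_mul h2 he2 (sq_nonneg ε) (by positivity)
      _ ≤ 1 := by norm_num
  linarith
end

section
/- Let Π₀ and Π₁ be orthogonal projectors on a finite-dimensional Hilbert space with Π₀Π₁ = 0, let D be a projector, and let |ψ⟩ be a unit vector in the image of Π₀ + Π₁. Then ‖Π₁ D Π₀ |ψ⟩‖² + ‖Π₀ D Π₁ |ψ⟩‖² ≥ (1/2) · ( ‖D|ψ⟩‖² − (‖DΠ₀|ψ⟩‖² + ‖DΠ₁|ψ⟩‖²) )². -/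
open scoped InnerProductSpace ComplexOrder

/-- For orthogonal projectors Π₀, Π₁ with Π₀Π₁ = 0, a projector D, and a unit vector ψ in
the image of Π₀ + Π₁:
‖Π₁DΠ₀ψ‖² + ‖Π₀DΠ₁ψ‖² ≥ (1/2)(‖Dψ‖² − (‖DΠ₀ψ‖² + ‖DΠ₁ψ‖²))². -/
theorem stmt15 {E : Type*} [NormedAddCommGroup E] [InnerProductSpace ℂ E]
    [FiniteDimensional ℂ E]
    (P₀ P₁ D : E →ₗ[ℂ] E)
    (hP₀ : P₀.IsSymmetric) (hP₀i : P₀ ∘ₗ P₀ = P₀)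
    (hP₁ : P₁.IsSymmetric) (hP₁i : P₁ ∘ₗ P₁ = P₁)
    (hD : D.IsSymmetric) (hDi : D ∘ₗ D = D)
    (horth : P₀ ∘ₗ P₁ = 0) (horth' : P₁ ∘ₗ P₀ = 0)
    (ψ : E) (hψ : ‖ψ‖ = 1) (him : (P₀ + P₁) ψ = ψ) :
    1 / 2 * (‖D ψ‖ ^ 2 - (‖D (P₀ ψ)‖ ^ 2 + ‖D (P₁ ψ)‖ ^ 2)) ^ 2
      ≤ ‖P₁ (D (P₀ ψ))‖ ^ 2 + ‖P₀ (D (P₁ ψ))‖ ^ 2 := by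
  set a := P₀ ψ with ha
  set b := P₁ ψ with hb
  have hPa : P₀ a = a := LinearMap.ext_iff.mp hP₀i ψ
  have hPb : P₁ b = b := LinearMap.ext_iff.mp hP₁i ψ
  have hDD : ∀ v : E, D (D v) = D v := fun v => LinearMap.ext_iff.mp hDi v
  have hab : ⟪a, b⟫_ℂ = 0 := by
    rw [ha, hP₀ ψ (P₁ ψ)]
    have : P₀ (P₁ ψ) = 0 := LinearMap.ext_iff.mp horth ψ
    rw [this, inner_zero_right]
  have hsum : a + b = ψ := him
  -- Pythagoras: ‖a‖² + ‖b‖² = 1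
  have hpyth : ‖a‖ ^ 2 + ‖b‖ ^ 2 = 1 := by
    have := @norm_add_sq ℂ E _ _ _ a b
    rw [hab, map_zero] at this
    rw [hsum, hψ] at this
    nlinarith [this]
  set x := ⟪D a, D b⟫_ℂ with hx
  have hx1 : x = ⟪a, P₀ (D b)⟫_ℂ := by
    rw [hx, hD a (D b), hDD b]
    conv_lhs => rw [← hPa]
    rw [hP₀ a (D b)]
  have hx2 : x = ⟪P₁ (D a), b⟫_ℂ := by
    rw [hx, ← hD (D a) b, hDD a]
    conv_lhs => rw [← hPb]
    rw [← hP₁ (D a) b]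
  have h1 : ‖x‖ ≤ ‖a‖ * ‖P₀ (D b)‖ := by rw [hx1]; exact norm_inner_le_norm _ _
  have h2 : ‖x‖ ≤ ‖P₁ (D a)‖ * ‖b‖ := by rw [hx2]; exact norm_inner_le_norm _ _
  have hDψ : D ψ = D a + D b := by rw [← hsum, map_add]
  have hexp : ‖D ψ‖ ^ 2 = ‖D a‖ ^ 2 + 2 * Complex.re x + ‖D b‖ ^ 2 := by
    rw [hDψ]; exact @norm_add_sq ℂ E _ _ _ (D a) (D b)
  have hre : |Complex.re x| ≤ ‖x‖ := Complex.abs_re_le_norm x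
  have hna : (0:ℝ) ≤ ‖a‖ := norm_nonneg _
  have hnb : (0:ℝ) ≤ ‖b‖ := norm_nonneg _
  have hn1 : (0:ℝ) ≤ ‖P₁ (D a)‖ := norm_nonneg _
  have hn0 : (0:ℝ) ≤ ‖P₀ (D b)‖ := norm_nonneg _
  have hxnn : (0:ℝ) ≤ ‖x‖ := norm_nonneg _
  rw [hexp]
  have hs1 : ‖x‖ ^ 2 ≤ ‖a‖ ^ 2 * ‖P₀ (D b)‖ ^ 2 := by
    have := pow_le_pow_left₀ hxnn h1 2
    calc ‖x‖ ^ 2 ≤ (‖a‖ * ‖P₀ (D b)‖) ^ 2 := this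
      _ = ‖a‖ ^ 2 * ‖P₀ (D b)‖ ^ 2 := by ring
  have hs2 : ‖x‖ ^ 2 ≤ ‖P₁ (D a)‖ ^ 2 * ‖b‖ ^ 2 := by
    have := pow_le_pow_left₀ hxnn h2 2
    calc ‖x‖ ^ 2 ≤ (‖P₁ (D a)‖ * ‖b‖) ^ 2 := this
      _ = ‖P₁ (D a)‖ ^ 2 * ‖b‖ ^ 2 := by ring
  have ha1 : ‖a‖ ^ 2 ≤ 1 := by linarith [sq_nonneg ‖b‖]
  have hb1 : ‖b‖ ^ 2 ≤ 1 := by linarith [sq_nonneg ‖a‖]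
  have hs1' : ‖x‖ ^ 2 ≤ ‖P₀ (D b)‖ ^ 2 := by
    have h := mul_le_mul_of_nonneg_right ha1 (sq_nonneg ‖P₀ (D b)‖)
    rw [one_mul] at h
    exact hs1.trans h
  have hs2' : ‖x‖ ^ 2 ≤ ‖P₁ (D a)‖ ^ 2 := by
    have h := mul_le_mul_of_nonneg_left hb1 (sq_nonneg ‖P₁ (D a)‖)
    rw [mul_one] at h
    exact hs2.trans h
  have hrx : (Complex.re x) ^ 2 ≤ ‖x‖ ^ 2 := by
    have := pow_le_pow_left₀ (abs_nonneg _) hre 2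
    calc (Complex.re x) ^ 2 = |Complex.re x| ^ 2 := (sq_abs _).symm
      _ ≤ ‖x‖ ^ 2 := this
  have goal_eq : 1 / 2 * (‖D a‖ ^ 2 + 2 * Complex.re x + ‖D b‖ ^ 2
      - (‖D a‖ ^ 2 + ‖D b‖ ^ 2)) ^ 2 = 2 * (Complex.re x) ^ 2 := by ring
  rw [goal_eq]
  linarith
end
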